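/- Let G be a subcubic graph such that ω(G) < 9·γ_{b,2}(G) while ω(H) ≥ 9·γ_{b,2}(H) for every proper subgraph H of G, where ω(H) = 9n₀(H) + 5n₁(H) + 4n₂(H) + 3n₃(H) + 2b(H). Then every vertex of G has at most one neighbor of degree 1. -/

import Mathlib

open SimpleGraph

/-- The degree of a vertex, defined via the cardinality of its neighbor set. -/
noncomputable def deg {V : Type*} (G : SimpleGraph V) (v : V) : ℕ :=
  (G.neighborSet v).ncard

/-- `f` is a 2-limited dominating broadcast on `G`: `f : V → {0,1,2}` and every vertex `u`
hears from some vertex `v` with `f v > 0` within distance `f v`. -/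
def IsLD2 {V : Type*} (G : SimpleGraph V) (f : V → ℕ) : Prop :=
  (∀ v, f v ≤ 2) ∧ ∀ u, ∃ v, 0 < f v ∧ G.Reachable u v ∧ G.dist u v ≤ f v

/-- The cost of a broadcast. -/
noncomputable def cost {V : Type*} (f : V → ℕ) : ℕ := ∑ᶠ v, f v

/-- The 2-limited broadcast domination number. -/
noncomputable def gamma2 {V : Type*} (G : SimpleGraph V) : ℕ :=
  sInf {c | ∃ f, IsLD2 G f ∧ cost f = c}

/-- `K₄*`: the graph obtained from `K₄` by subdividing one edge. Vertices `0,1,2,3` form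
`K₄` minus the edge `01`, and vertex `4` subdivides that edge. -/
def K4star : SimpleGraph (Fin 5) :=
  SimpleGraph.fromEdgeSet {s(0,2), s(0,3), s(1,2), s(1,3), s(2,3), s(0,4), s(1,4)}

/-- A connected component is *bad* if the subgraph induced on it is isomorphic to `C₄`
or to `K₄*`. -/
def IsBadComponent {V : Type*} (G : SimpleGraph V) (c : G.ConnectedComponent) : Prop :=
  Nonempty (G.induce c.supp ≃g cycleGraph 4) ∨ Nonempty (G.induce c.supp ≃g K4star)

/-- The number of bad connected components of `G`. -/
noncomputable def numBad {V : Type*} (G : SimpleGraph V) : ℕ :=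
  Nat.card {c : G.ConnectedComponent // IsBadComponent G c}

/-- The number of vertices of degree `i` in `G`. -/
noncomputable def nd {V : Type*} (G : SimpleGraph V) (i : ℕ) : ℕ :=
  Nat.card {v : V // deg G v = i}

/-- The weight `ω(G) = 9n₀ + 5n₁ + 4n₂ + 3n₃ + 2b(G)`. -/
noncomputable def weight {V : Type*} (G : SimpleGraph V) : ℕ :=
  9 * nd G 0 + 5 * nd G 1 + 4 * nd G 2 + 3 * nd G 3 + 2 * numBad G

section A
variable {V : Type*} {G : SimpleGraph V}

lemma mem_of_reachable_closed (T : Set V) (hT : ∀ a ∈ T, ∀ b, G.Adj a b → b ∈ T)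
    {x y : V} (hx : x ∈ T) (h : G.Reachable x y) : y ∈ T := by
  obtain ⟨p⟩ := h
  induction p with
  | nil => exact hx
  | cons hadj p ih => exact ih (hT _ hx _ hadj)

lemma dist_map_le {W : Type*} {G' : SimpleGraph W} (φ : G →g G') {x y : V}
    (h : G.Reachable x y) : G'.dist (φ x) (φ y) ≤ G.dist x y := by
  obtain ⟨p, hp⟩ := h.exists_walk_length_eq_dist
  calc G'.dist (φ x) (φ y) ≤ (p.map φ).length := SimpleGraph.dist_le _
    _ = G.dist x y := by rw [Walk.length_map, hp]

lemma adj_dist_le_one {x y : V} (h : G.Adj x y) : G.dist x y ≤ 1 :=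
  (SimpleGraph.dist_le (Walk.cons h Walk.nil)).trans (by simp)

/-- a valid LD2 broadcast always exists -/
lemma isLD2_const_two : IsLD2 G (fun _ => 2) :=
  ⟨fun _ => le_refl _, fun u => ⟨u, by simp, Reachable.refl u, by rw [SimpleGraph.dist_self]; omega⟩⟩

lemma gamma2_spec [Finite V] : ∃ f, IsLD2 G f ∧ cost f = gamma2 G := by
  have hne : {c | ∃ f, IsLD2 G f ∧ cost f = c}.Nonempty :=
    ⟨_, (fun _ => 2), isLD2_const_two, rfl⟩
  exact Nat.sInf_mem hne

lemma gamma2_le {f : V → ℕ} (hf : IsLD2 G f) : gamma2 G ≤ cost f :=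
  Nat.sInf_le ⟨f, hf, rfl⟩

end A
section B
open Finset
variable {V : Type*} [Fintype V]

noncomputable def coef : ℕ → ℕ
  | 0 => 9 | 1 => 5 | 2 => 4 | 3 => 3 | _ => 0

lemma weight_eq_sum (G : SimpleGraph V) (h : ∀ x, deg G x ≤ 3) :
    weight G = (∑ x, coef (deg G x)) + 2 * numBad G := by
  classical
  unfold weight nd
  have hcard : ∀ i : ℕ, Nat.card {v : V // deg G v = i}
      = ∑ x, (if deg G x = i then 1 else 0) := by
    intro i
    rw [Nat.card_eq_fintype_card, Fintype.card_subtype, Finset.sum_boole]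
    simp
  have key : ∀ x : V, coef (deg G x) =
      9 * (if deg G x = 0 then 1 else 0) + 5 * (if deg G x = 1 then 1 else 0)
      + 4 * (if deg G x = 2 then 1 else 0) + 3 * (if deg G x = 3 then 1 else 0) := by
    intro x
    have := h x
    interval_cases hd : deg G x <;> simp [coef]
  have : (∑ x, coef (deg G x)) = ∑ x, (9 * (if deg G x = 0 then 1 else 0)
      + 5 * (if deg G x = 1 then 1 else 0)
      + 4 * (if deg G x = 2 then 1 else 0) + 3 * (if deg G x = 3 then 1 else 0)) :=
    Finset.sum_congr rfl (fun x _ => key x)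
  rw [this]
  simp only [Finset.sum_add_distrib, ← Finset.mul_sum, ← hcard]

end B
section C
variable {V : Type*} {G : SimpleGraph V}

@[reducible] def indSub (G : SimpleGraph V) (S : Set V) : G.Subgraph where
  verts := S
  Adj a b := a ∈ S ∧ b ∈ S ∧ G.Adj a b
  adj_sub h := h.2.2
  edge_vert h := h.1
  symm := ⟨fun a b h => ⟨h.2.1, h.1, h.2.2.symm⟩⟩

@[simp] lemma indSub_coe_adj {S : Set V} (a b : ↥S) :
    (indSub G S).coe.Adj a b ↔ G.Adj ↑a ↑b := by
  constructor
  · exact fun h => h.2.2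
  · exact fun h => ⟨a.2, b.2, h⟩

lemma transfer_comp (S : Set V) (c : (indSub G S).coe.ConnectedComponent)
    (hcl : ∀ x ∈ (Subtype.val '' c.supp), ∀ y, G.Adj x y → y ∈ Subtype.val '' c.supp) :
    ∃ c' : G.ConnectedComponent, c'.supp = Subtype.val '' c.supp := by
  obtain ⟨x₀, rfl⟩ := c.exists_rep
  refine ⟨G.connectedComponentMk ↑x₀, ?_⟩
  ext y
  simp only [ConnectedComponent.mem_supp_iff, ConnectedComponent.eq]
  constructor
  · intro hy
    have hx₀ : (x₀ : V) ∈ Subtype.val '' ((indSub G S).coe.connectedComponentMk x₀).supp := by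
      exact ⟨x₀, by simp [ConnectedComponent.mem_supp_iff], rfl⟩
    exact mem_of_reachable_closed _ hcl hx₀ hy.symm
  · rintro ⟨z, hz, rfl⟩
    have hz : (indSub G S).coe.connectedComponentMk z = (indSub G S).coe.connectedComponentMk x₀ := hz
    have hr : (indSub G S).coe.Reachable z x₀ := ConnectedComponent.eq.mp hz
    exact hr.map (Subgraph.hom _)

noncomputable def transfer_iso (S : Set V) (c : (indSub G S).coe.ConnectedComponent) :
    (indSub G S).coe.induce c.supp ≃g G.induce (Subtype.val '' c.supp) where
  toEquiv := Equiv.Set.image Subtype.val c.supp Subtype.val_injective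
  map_rel_iff' := by
    intro a b
    simp only [Equiv.Set.image, Equiv.Set.imageOfInjOn, comap_adj, Equiv.coe_fn_mk,
      Function.Embedding.coeFn_mk]
    exact ⟨fun h => ⟨a.1.2, b.1.2, h⟩, fun h => h.2.2⟩

lemma transfer_bad (S : Set V) (c : (indSub G S).coe.ConnectedComponent)
    (c' : G.ConnectedComponent) (hs : c'.supp = Subtype.val '' c.supp)
    (hb : IsBadComponent (indSub G S).coe c) : IsBadComponent G c' := by
  have e : G.induce c'.supp ≃g (indSub G S).coe.induce c.supp := by
    rw [hs]; exact (transfer_iso S c).symm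
  rcases hb with ⟨⟨i⟩⟩ | ⟨⟨i⟩⟩
  · exact Or.inl ⟨e.trans i⟩
  · exact Or.inr ⟨e.trans i⟩

end C
section D
variable {V : Type*} {G : SimpleGraph V} [Finite V]

lemma numBad_le_of_closed (S : Set V)
    (hcl : ∀ c : (indSub G S).coe.ConnectedComponent, IsBadComponent (indSub G S).coe c →
      ∀ x ∈ Subtype.val '' c.supp, ∀ y, G.Adj x y → y ∈ Subtype.val '' c.supp) :
    numBad (indSub G S).coe ≤ numBad G := by
  classical
  have key : ∀ c : {c : (indSub G S).coe.ConnectedComponent // IsBadComponent _ c},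
      ∃ c' : {c' : G.ConnectedComponent // IsBadComponent G c'},
        c'.1.supp = Subtype.val '' c.1.supp := by
    rintro ⟨c, hc⟩
    obtain ⟨c', hs⟩ := transfer_comp S c (hcl c hc)
    exact ⟨⟨c', transfer_bad S c c' hs hc⟩, hs⟩
  choose Φ hΦ using key
  have hinj : Function.Injective Φ := by
    intro a b hab
    have := (hΦ a).symm.trans (hab ▸ hΦ b)
    have hsupp := (Set.image_injective.mpr Subtype.val_injective) this
    exact Subtype.ext (ConnectedComponent.supp_injective hsupp)
  exact Nat.card_le_card_of_injective Φ hinj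

lemma numBad_le_succ (S : Set V) (w : V) (hw : w ∈ S)
    (hcl : ∀ c : (indSub G S).coe.ConnectedComponent, IsBadComponent (indSub G S).coe c →
      (⟨w, hw⟩ : ↥S) ∉ c.supp →
      ∀ x ∈ Subtype.val '' c.supp, ∀ y, G.Adj x y → y ∈ Subtype.val '' c.supp) :
    numBad (indSub G S).coe ≤ numBad G + 1 := by
  classical
  haveI : Finite G.ConnectedComponent := Quot.finite _
  haveI := Fintype.ofFinite {c' : G.ConnectedComponent // IsBadComponent G c'}
  have key : ∀ c : {c : (indSub G S).coe.ConnectedComponent // IsBadComponent _ c},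
      (⟨w, hw⟩ : ↥S) ∉ c.1.supp →
      ∃ c' : {c' : G.ConnectedComponent // IsBadComponent G c'},
        c'.1.supp = Subtype.val '' c.1.supp := by
    rintro ⟨c, hc⟩ hwc
    obtain ⟨c', hs⟩ := transfer_comp S c (hcl c hc hwc)
    exact ⟨⟨c', transfer_bad S c c' hs hc⟩, hs⟩
  choose Φ hΦ using key
  set Ψ : {c : (indSub G S).coe.ConnectedComponent // IsBadComponent _ c} →
      Option {c' : G.ConnectedComponent // IsBadComponent G c'} :=
    fun c => if h : (⟨w, hw⟩ : ↥S) ∈ c.1.supp then none else some (Φ c h) with hΨ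
  have hinj : Function.Injective Ψ := by
    intro a b hab
    simp only [hΨ] at hab
    split_ifs at hab with h1 h2 h2
    · refine Subtype.ext (ConnectedComponent.supp_injective ?_)
      ext x
      rw [ConnectedComponent.mem_supp_iff, ConnectedComponent.mem_supp_iff,
        ← (ConnectedComponent.mem_supp_iff a.1 _).mp h1,
        ← (ConnectedComponent.mem_supp_iff b.1 _).mp h2]
    · simp only [Option.some.injEq] at hab
      have := (hΦ a h1).symm.trans (hab ▸ hΦ b h2)
      have hsupp := (Set.image_injective.mpr Subtype.val_injective) this
      exact Subtype.ext (ConnectedComponent.supp_injective hsupp)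
  calc numBad (indSub G S).coe ≤ Nat.card (Option {c' : G.ConnectedComponent // IsBadComponent G c'}) :=
        Nat.card_le_card_of_injective Ψ hinj
    _ = numBad G + 1 := Finite.card_option
end D
section E
variable {V : Type*} {G : SimpleGraph V}

lemma deg_indSub (S : Set V) (x : ↥S) :
    deg (indSub G S).coe x = (S ∩ G.neighborSet ↑x).ncard := by
  unfold deg
  rw [← Set.ncard_image_of_injective _ Subtype.val_injective]
  congr 1
  ext y
  simp only [Set.mem_image, mem_neighborSet, indSub_coe_adj, Set.mem_inter_iff]
  constructor
  · rintro ⟨z, hz, rfl⟩; exact ⟨z.2, hz⟩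
  · rintro ⟨hyS, hadj⟩; exact ⟨⟨y, hyS⟩, hadj, rfl⟩

lemma supp_isolated {α : Type*} (A : SimpleGraph α) (x : α) (h : ∀ y, ¬ A.Adj x y) :
    (A.connectedComponentMk x).supp = {x} := by
  ext y
  simp only [ConnectedComponent.mem_supp_iff, ConnectedComponent.eq, Set.mem_singleton_iff]
  constructor
  · intro hy
    have hcl : ∀ a ∈ ({x} : Set α), ∀ b, A.Adj a b → b ∈ ({x} : Set α) := by
      rintro a rfl b hab; exact absurd hab (h b)
    exact (mem_of_reachable_closed ({x} : Set α) hcl rfl hy.symm).symm ▸ rfl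
  · rintro rfl; rfl

lemma not_bad_of_singleton {α : Type*} (A : SimpleGraph α) (c : A.ConnectedComponent)
    (x : α) (h : c.supp = {x}) : ¬ IsBadComponent A c := by
  intro hb
  have h1 : Nat.card ↥c.supp = 1 := by rw [h]; simp [Nat.card_coe_set_eq]
  rcases hb with ⟨⟨i⟩⟩ | ⟨⟨i⟩⟩
  · have := Nat.card_congr i.toEquiv
    rw [h1] at this
    simp at this
  · have := Nat.card_congr i.toEquiv
    rw [h1] at this
    simp at this

lemma gamma2_le_succ [Fintype V] (S : Set V) (v : V) (hv : v ∉ S)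
    (hcov : ∀ u, u ∉ S → G.Reachable u v ∧ G.dist u v ≤ 1) :
    gamma2 G ≤ gamma2 (indSub G S).coe + 1 := by
  classical
  haveI : Fintype ↥S := Fintype.ofFinite _
  obtain ⟨f, hf, hcost⟩ := gamma2_spec (G := (indSub G S).coe)
  set g : V → ℕ := fun x => if hx : x ∈ S then f ⟨x, hx⟩ else if x = v then 1 else 0 with hg
  have hgv : g v = 1 := by rw [hg]; dsimp only; rw [dif_neg hv, if_pos rfl]
  have hgS : ∀ x : ↥S, g ↑x = f x := by
    intro x; rw [hg]; dsimp only; rw [dif_pos x.2]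
  have hLD : IsLD2 G g := by
    constructor
    · intro x; rw [hg]; dsimp only
      split_ifs
      · exact hf.1 _
      · omega
      · omega
    · intro u
      by_cases hu : u ∈ S
      · obtain ⟨x, hx0, hxr, hxd⟩ := hf.2 ⟨u, hu⟩
        refine ⟨↑x, by rw [hgS]; exact hx0, hxr.map (Subgraph.hom _), ?_⟩
        calc G.dist u ↑x ≤ (indSub G S).coe.dist ⟨u, hu⟩ x := dist_map_le (Subgraph.hom _) hxr
          _ ≤ f x := hxd
          _ = g ↑x := (hgS x).symm
      · obtain ⟨hr, hd⟩ := hcov u hu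
        exact ⟨v, by rw [hgv]; omega, hr, by rw [hgv]; exact hd⟩
  have hcg : cost g = cost f + 1 := by
    unfold cost
    rw [finsum_eq_sum_of_fintype, finsum_eq_sum_of_fintype]
    rw [← Finset.sum_add_sum_compl S.toFinset g]
    have h1 : ∑ x ∈ S.toFinset, g x = ∑ x : ↥S, f x := by
      rw [Finset.sum_subtype (p := fun x => x ∈ S) S.toFinset (by simp) g]
      exact Finset.sum_congr rfl (fun x _ => hgS x)
    have h2 : ∑ x ∈ S.toFinsetᶜ, g x = 1 := by
      have : ∀ x ∈ S.toFinsetᶜ, g x = if x = v then 1 else 0 := by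
        intro x hx
        rw [Finset.mem_compl, Set.mem_toFinset] at hx
        rw [hg]; dsimp only; rw [dif_neg hx]
      rw [Finset.sum_congr rfl this, Finset.sum_ite_eq' S.toFinsetᶜ v (fun _ => 1)]
      simp [hv]
    rw [h1, h2]
  calc gamma2 G ≤ cost g := gamma2_le hLD
    _ = gamma2 (indSub G S).coe + 1 := by rw [hcg, hcost]
end E
section F
variable {V : Type*} {G : SimpleGraph V}

lemma closure_helper (S : Set V) (c : (indSub G S).coe.ConnectedComponent)
    (hS : ∀ x, (∃ h : x ∈ S, (⟨x, h⟩ : ↥S) ∈ c.supp) → ∀ y, G.Adj x y → y ∈ S) :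
    ∀ x ∈ Subtype.val '' c.supp, ∀ y, G.Adj x y → y ∈ Subtype.val '' c.supp := by
  rintro x ⟨x', hx', rfl⟩ y hxy
  have hyS : y ∈ S := hS _ ⟨x'.2, hx'⟩ y hxy
  refine ⟨⟨y, hyS⟩, ?_, rfl⟩
  rw [ConnectedComponent.mem_supp_iff] at hx' ⊢
  rw [← hx']
  exact ConnectedComponent.eq.mpr
    (Adj.reachable ((indSub_coe_adj (⟨y, hyS⟩ : ↥S) x').mpr hxy.symm))
end F

theorem stmt18 {V : Type*} [Fintype V] (G : SimpleGraph V)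
    (hsub : ∀ v, deg G v ≤ 3)
    (hG : weight G < 9 * gamma2 G)
    (hmin : ∀ H : G.Subgraph, H ≠ ⊤ →
      9 * gamma2 H.coe ≤ weight H.coe) :
    ∀ v : V, ({u | G.Adj v u ∧ deg G u = 1}).ncard ≤ 1 := by
  classical
  intro v
  by_contra hcon
  push_neg at hcon
  obtain ⟨u1, hu1m, u2, hu2m, hne⟩ := (Set.one_lt_ncard (Set.toFinite _)).mp hcon
  obtain ⟨hadj1, hd1⟩ := hu1m
  obtain ⟨hadj2, hd2⟩ := hu2m
  have hN1 : G.neighborSet u1 = {v} := by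
    obtain ⟨a, ha⟩ := Set.ncard_eq_one.mp hd1
    have hv1 : v ∈ G.neighborSet u1 := hadj1.symm
    rw [ha] at hv1 ⊢
    rw [Set.mem_singleton_iff] at hv1
    rw [hv1]
  have hN2 : G.neighborSet u2 = {v} := by
    obtain ⟨a, ha⟩ := Set.ncard_eq_one.mp hd2
    have hv2 : v ∈ G.neighborSet u2 := hadj2.symm
    rw [ha] at hv2 ⊢
    rw [Set.mem_singleton_iff] at hv2
    rw [hv2]
  have hvu1 : v ≠ u1 := hadj1.ne
  have hvu2 : v ≠ u2 := hadj2.ne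
  set S : Set V := ({v, u1, u2} : Set V)ᶜ with hS
  have hmemS : ∀ x, x ∈ S ↔ x ≠ v ∧ x ≠ u1 ∧ x ≠ u2 := by
    intro x; simp [hS]; try tauto
  have hnotS : ∀ x, x ∉ S ↔ (x = v ∨ x = u1 ∨ x = u2) := by
    intro x; rw [hmemS]; tauto
  have hvS : v ∉ S := by rw [hnotS]; left; rfl
  have hSadj : ∀ x ∈ S, ∀ y, G.Adj x y → y ∉ S → (y = v ∧ x ∈ G.neighborSet v) := by
    intro x hx y hxy hyS
    rcases (hnotS y).mp hyS with h | h | h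
    · subst h; exact ⟨rfl, hxy.symm⟩
    · exfalso
      rw [h] at hxy
      have hx' : x ∈ G.neighborSet u1 := hxy.symm
      rw [hN1, Set.mem_singleton_iff] at hx'
      exact ((hmemS x).mp hx).1 hx'
    · exfalso
      rw [h] at hxy
      have hx' : x ∈ G.neighborSet u2 := hxy.symm
      rw [hN2, Set.mem_singleton_iff] at hx'
      exact ((hmemS x).mp hx).1 hx'
  set H : G.Subgraph := indSub G S with hH
  have hHne : H ≠ ⊤ := by
    intro h
    have : v ∈ H.verts := by rw [h]; trivial
    exact hvS this
  have hMIN : 9 * gamma2 (indSub G S).coe ≤ weight (indSub G S).coe := hmin H hHne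
  have hsubH : ∀ x : ↥S, deg (indSub G S).coe x ≤ 3 := by
    intro x
    rw [deg_indSub]
    exact le_trans (Set.ncard_le_ncard Set.inter_subset_right (Set.toFinite _)) (hsub ↑x)
  haveI : Fintype ↥S := Fintype.ofFinite _
  have hcov : ∀ u, u ∉ S → G.Reachable u v ∧ G.dist u v ≤ 1 := by
    intro u hu
    rcases (hnotS u).mp hu with rfl | rfl | rfl
    · exact ⟨Reachable.refl u, by rw [SimpleGraph.dist_self]; omega⟩
    · exact ⟨(hadj1.symm).reachable, adj_dist_le_one hadj1.symm⟩
    · exact ⟨(hadj2.symm).reachable, adj_dist_le_one hadj2.symm⟩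
  have hga : gamma2 G ≤ gamma2 (indSub G S).coe + 1 := gamma2_le_succ S v hvS hcov
  have hwH : weight (indSub G S).coe
      = (∑ x : ↥S, coef (deg (indSub G S).coe x)) + 2 * numBad (indSub G S).coe :=
    weight_eq_sum _ hsubH
  have hwG : weight G = (∑ x, coef (deg G x)) + 2 * numBad G := weight_eq_sum G hsub
  -- sum over S subtype = sum over S.toFinset
  have hsumS : (∑ x : ↥S, coef (deg (indSub G S).coe x))
      = ∑ x ∈ S.toFinset, coef ((S ∩ G.neighborSet x).ncard) := by
    rw [Finset.sum_subtype (p := fun x => x ∈ S) S.toFinset (by simp)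
      (fun x => coef ((S ∩ G.neighborSet x).ncard))]
    exact Finset.sum_congr rfl (fun x _ => by rw [deg_indSub])
  -- split total sum
  have hcompl : S.toFinsetᶜ = ({v, u1, u2} : Finset V) := by
    ext x
    simp [hS]
  have hsplit : (∑ x, coef (deg G x))
      = coef (deg G v) + 5 + 5 + ∑ x ∈ S.toFinset, coef (deg G x) := by
    rw [← Finset.sum_add_sum_compl S.toFinset (fun x => coef (deg G x)), hcompl]
    rw [show ({v, u1, u2} : Finset V) = insert v (insert u1 {u2}) from rfl,
      Finset.sum_insert (by simp [hvu1, hvu2]), Finset.sum_insert (by simp [hne]),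
      Finset.sum_singleton, hd1, hd2]
    rw [show coef 1 = 5 from rfl]
    ring
  -- structure of neighborhood of v
  set W : Set V := G.neighborSet v \ {u1, u2} with hW
  have hNv : G.neighborSet v = {u1, u2} ∪ W := by
    rw [hW, Set.union_diff_cancel]
    intro x hx
    rcases hx with rfl | rfl
    · exact hadj1
    · exact hadj2
  have hdegv : deg G v = 2 + W.ncard := by
    unfold deg
    rw [hNv, Set.ncard_union_eq (Set.disjoint_sdiff_right) (Set.toFinite _) (Set.toFinite _),
      Set.ncard_pair hne]
  have hWle : W.ncard ≤ 1 := by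
    have := hsub v
    omega
  rcases W.eq_empty_or_nonempty with hWe | ⟨w, hwW⟩
  · -- no third neighbor
    have hdv2 : deg G v = 2 := by rw [hdegv, hWe]; simp
    have hSclosed : ∀ x ∈ S, ∀ y, G.Adj x y → y ∈ S := by
      intro x hx y hxy
      by_contra hyS
      obtain ⟨rfl, hxN⟩ := hSadj x hx y hxy hyS
      rw [hNv, hWe] at hxN
      simp only [Set.union_empty, Set.mem_insert_iff, Set.mem_singleton_iff] at hxN
      rcases hxN with rfl | rfl
      · exact ((hmemS x).mp hx).2.1 rfl
      · exact ((hmemS x).mp hx).2.2 rfl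
    have hsum_eq : (∑ x ∈ S.toFinset, coef ((S ∩ G.neighborSet x).ncard))
        = ∑ x ∈ S.toFinset, coef (deg G x) := by
      refine Finset.sum_congr rfl (fun x hx => ?_)
      rw [Set.mem_toFinset] at hx
      have : S ∩ G.neighborSet x = G.neighborSet x := by
        apply Set.inter_eq_self_of_subset_right
        intro y hy
        exact hSclosed x hx y hy
      rw [this]; rfl
    have hnb : numBad (indSub G S).coe ≤ numBad G := by
      apply numBad_le_of_closed S
      intro c _
      apply closure_helper
      rintro x ⟨hxS, _⟩ y hxy
      exact hSclosed x hxS y hxy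
    rw [hwH, hsumS, hsum_eq] at hMIN
    rw [hwG, hsplit, hdv2] at hG
    have : coef 2 = 4 := rfl
    omega
  · -- third neighbor w
    have hWs : W = {w} := by
      apply Set.eq_singleton_iff_unique_mem.mpr
      exact ⟨hwW, fun x hx => (Set.ncard_le_one (Set.toFinite _)).mp hWle x hx w hwW⟩
    have hdv3 : deg G v = 3 := by rw [hdegv, hWs]; simp
    have hadjvw : G.Adj v w := (Set.diff_subset hwW)
    have hwv : w ≠ v := hadjvw.ne'
    have hwS : w ∈ S := by
      rw [hmemS]
      refine ⟨hwv, ?_, ?_⟩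
      · intro h; exact hwW.2 (by simp [h])
      · intro h; exact hwW.2 (by simp [h])
    have hvNw : v ∈ G.neighborSet w := hadjvw.symm
    have hSonly : ∀ x ∈ S, ∀ y, G.Adj x y → y ∉ S → x = w := by
      intro x hx y hxy hyS
      obtain ⟨rfl, hxN⟩ := hSadj x hx y hxy hyS
      rw [hNv, hWs] at hxN
      simp only [Set.mem_union, Set.mem_insert_iff, Set.mem_singleton_iff] at hxN
      rcases hxN with (rfl | rfl) | rfl
      · exact absurd rfl ((hmemS x).mp hx).2.1
      · exact absurd rfl ((hmemS x).mp hx).2.2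
      · rfl
    have hNwS : S ∩ G.neighborSet w = G.neighborSet w \ {v} := by
      ext y
      simp only [Set.mem_inter_iff, Set.mem_diff, Set.mem_singleton_iff]
      constructor
      · rintro ⟨hyS, hyN⟩; exact ⟨hyN, fun h => hvS (h ▸ hyS)⟩
      · rintro ⟨hyN, hyv⟩
        refine ⟨?_, hyN⟩
        rw [hmemS]
        refine ⟨hyv, ?_, ?_⟩
        · intro h
          rw [h] at hyN
          have : w ∈ G.neighborSet u1 := hyN.symm
          rw [hN1, Set.mem_singleton_iff] at this
          exact hwv this
        · intro h
          rw [h] at hyN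
          have : w ∈ G.neighborSet u2 := hyN.symm
          rw [hN2, Set.mem_singleton_iff] at this
          exact hwv this
    have hdegHw : (S ∩ G.neighborSet w).ncard = deg G w - 1 := by
      rw [hNwS]
      exact Set.ncard_diff_singleton_of_mem hvNw
    have hdw_pos : 1 ≤ deg G w := by
      exact (Set.ncard_pos (Set.toFinite _)).mpr ⟨v, hvNw⟩
    have hdw_le : deg G w ≤ 3 := hsub w
    -- split S-sums at w
    have hwF : w ∈ S.toFinset := by rwa [Set.mem_toFinset]
    have herase : ∀ x ∈ S.toFinset.erase w,
        coef ((S ∩ G.neighborSet x).ncard) = coef (deg G x) := by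
      intro x hx
      obtain ⟨hxw, hxS⟩ := Finset.mem_erase.mp hx
      rw [Set.mem_toFinset] at hxS
      have : S ∩ G.neighborSet x = G.neighborSet x := by
        apply Set.inter_eq_self_of_subset_right
        intro y hy
        by_contra hyS
        exact hxw (hSonly x hxS y hy hyS)
      rw [this]; rfl
    have hsplitH : (∑ x ∈ S.toFinset, coef ((S ∩ G.neighborSet x).ncard))
        = coef (deg G w - 1) + ∑ x ∈ S.toFinset.erase w, coef (deg G x) := by
      rw [← Finset.add_sum_erase _ _ hwF, hdegHw]
      congr 1
      exact Finset.sum_congr rfl herase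
    have hsplitG : (∑ x ∈ S.toFinset, coef (deg G x))
        = coef (deg G w) + ∑ x ∈ S.toFinset.erase w, coef (deg G x) := by
      rw [← Finset.add_sum_erase _ _ hwF]
    -- closure for components avoiding w
    have hclosure : ∀ (c : (indSub G S).coe.ConnectedComponent),
        (⟨w, hwS⟩ : ↥S) ∉ c.supp →
        ∀ x ∈ Subtype.val '' c.supp, ∀ y, G.Adj x y → y ∈ Subtype.val '' c.supp := by
      intro c hwc
      apply closure_helper
      rintro x ⟨hxS, hxc⟩ y hxy
      by_contra hyS
      have hxw := hSonly x hxS y hxy hyS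
      subst hxw
      exact hwc hxc
    by_cases hdw1 : deg G w = 1
    · -- w has degree 1, becomes isolated
      have hNw : G.neighborSet w = {v} := by
        obtain ⟨a, ha⟩ := Set.ncard_eq_one.mp hdw1
        rw [ha] at hvNw ⊢
        rw [Set.mem_singleton_iff] at hvNw
        rw [hvNw]
      have hiso : ∀ y, ¬ (indSub G S).coe.Adj ⟨w, hwS⟩ y := by
        intro y hy
        rw [indSub_coe_adj] at hy
        have : (y : V) ∈ G.neighborSet w := hy
        rw [hNw, Set.mem_singleton_iff] at this
        exact hvS (this ▸ y.2)
      have hnb : numBad (indSub G S).coe ≤ numBad G := by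
        apply numBad_le_of_closed S
        intro c hc
        have hwc : (⟨w, hwS⟩ : ↥S) ∉ c.supp := by
          intro hmem
          have hceq : (indSub G S).coe.connectedComponentMk ⟨w, hwS⟩ = c :=
            (ConnectedComponent.mem_supp_iff c _).mp hmem
          have hsing := supp_isolated (indSub G S).coe ⟨w, hwS⟩ hiso
          rw [hceq] at hsing
          exact not_bad_of_singleton _ c _ hsing hc
        exact hclosure c hwc
      rw [hwH, hsumS, hsplitH] at hMIN
      rw [hwG, hsplit, hsplitG, hdv3] at hG
      rw [hdw1] at hMIN hG
      have h1 : coef (1 - 1) = 9 := rfl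
      have h2 : coef 3 = 3 := rfl
      have h3 : coef 1 = 5 := rfl
      omega
    · -- w has degree 2 or 3
      have hdw23 : deg G w = 2 ∨ deg G w = 3 := by omega
      have hcoefw : coef (deg G w - 1) = coef (deg G w) + 1 := by
        rcases hdw23 with h | h <;> rw [h] <;> rfl
      have hnb : numBad (indSub G S).coe ≤ numBad G + 1 := by
        apply numBad_le_succ S w hwS
        intro c _ hwc
        exact hclosure c hwc
      rw [hwH, hsumS, hsplitH, hcoefw] at hMIN
      rw [hwG, hsplit, hsplitG, hdv3] at hG
      have h2 : coef 3 = 3 := rfl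
      omega
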